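/- Let q be even and O an oval in PG(2,q). Then every tangent line of O passes through a common point N (the nucleus); equivalently, the q+1 tangent lines of O are concurrent. -/

import Mathlib

open Projectivization
open scoped LinearAlgebra.Projectivization

/-- An o-permutation over a field `F` (of even order): `f 0 = 0`, `f 1 ≠ 0`, and for every
`s : F` the map `x ↦ (f (x + s) + f s) / x` is a permutation of `F \ {0}`. -/
def IsOPerm (F : Type*) [Field F] (f : F → F) : Prop :=
  f 0 = 0 ∧ f 1 ≠ 0 ∧
  ∀ s : F, Set.BijOn (fun x => (f (x + s) + f s) / x) {x : F | x ≠ 0} {x : F | x ≠ 0}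

variable (F : Type*) [Field F]

lemma vec_ne_zero₀ (t u : F) : (![1, t, u] : Fin 3 → F) ≠ 0 := by
  intro h; simpa using congrFun h 0

lemma vec_ne_zero₁ : (![0, 1, 0] : Fin 3 → F) ≠ 0 := by
  intro h; simpa using congrFun h 1

lemma vec_ne_zero₂ : (![0, 0, 1] : Fin 3 → F) ≠ 0 := by
  intro h; simpa using congrFun h 2

/-- The line of `PG(2, q)` with equation `a₀ x₀ + a₁ x₁ + a₂ x₂ = 0` (for `a ≠ 0`),
as a set of projective points. -/
def projLine (a : Fin 3 → F) : Set (ℙ F (Fin 3 → F)) :=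
  {p | ∑ i, a i * p.rep i = 0}

/-- An oval in `PG(2, q)`: a set of `q + 1` points, no three of which are collinear. -/
def IsOval (q : ℕ) (S : Set (ℙ F (Fin 3 → F))) : Prop :=
  Nat.card S = q + 1 ∧
  ∀ p₁ ∈ S, ∀ p₂ ∈ S, ∀ p₃ ∈ S, p₁ ≠ p₂ → p₁ ≠ p₃ → p₂ ≠ p₃ →
    Independent ![p₁, p₂, p₃]

/-- A nucleus of a set `S` of points of `PG(2, q)`: a point not in `S` such that every
line through it meets `S` in exactly one point. -/
def IsNucleus (N : ℙ F (Fin 3 → F)) (S : Set (ℙ F (Fin 3 → F))) : Prop :=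
  N ∉ S ∧ ∀ a : Fin 3 → F, a ≠ 0 → N ∈ projLine F a → ∃! p, p ∈ S ∧ p ∈ projLine F a

/-- The point set `D(f) = {(1, t, f t) : t ∈ GF(q)} ∪ {(0, 1, 0)}` of `PG(2, q)`. -/
def ovalD (f : F → F) : Set (ℙ F (Fin 3 → F)) :=
  {p | ∃ t : F, p = Projectivization.mk F ![1, t, f t] (vec_ne_zero₀ F t (f t))} ∪
    {Projectivization.mk F ![0, 1, 0] (vec_ne_zero₁ F)}

section TangentAux
variable {F : Type*} [Field F]

/-- dot product as a linear map in the second argument -/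
noncomputable def dl (a : Fin 3 → F) : (Fin 3 → F) →ₗ[F] F where
  toFun v := ∑ i, a i * v i
  map_add' x y := by simp [mul_add, Finset.sum_add_distrib]
  map_smul' c x := by simp [Finset.mul_sum, mul_left_comm]

lemma mem_projLine_iff (a : Fin 3 → F) (p : ℙ F (Fin 3 → F)) :
    p ∈ projLine F a ↔ dl a p.rep = 0 := Iff.rfl

lemma mem_projLine_iff_ker (a : Fin 3 → F) (p : ℙ F (Fin 3 → F)) :
    p ∈ projLine F a ↔ p.rep ∈ LinearMap.ker (dl a) := Iff.rfl

lemma mem_projLine_mk (a : Fin 3 → F) {v : Fin 3 → F} (hv : v ≠ 0) :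
    Projectivization.mk F v hv ∈ projLine F a ↔ dl a v = 0 := by
  obtain ⟨c, hc⟩ := Projectivization.exists_smul_eq_mk_rep F v hv
  have : (dl a) ((mk F v hv).rep) = (c : F) * dl a v := by
    rw [← hc, Units.smul_def, map_smul, smul_eq_mul]
  rw [mem_projLine_iff, this]
  simp [c.ne_zero]

lemma dl_ne_zero {a : Fin 3 → F} (ha : a ≠ 0) : dl a ≠ 0 := by
  obtain ⟨i, hi⟩ := Function.ne_iff.1 ha
  intro h
  apply hi
  have := congrFun (congrArg DFunLike.coe h) (Pi.single i 1)
  simpa [dl, Pi.single_apply, Finset.sum_ite_eq] using this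

lemma finrank_ker_dl {a : Fin 3 → F} (ha : a ≠ 0) :
    Module.finrank F (LinearMap.ker (dl a)) = 2 := by
  have h3 : Module.finrank F (Fin 3 → F) = 3 := by simp
  have hr : Module.finrank F (LinearMap.range (dl a)) = 1 := by
    have hle : Module.finrank F (LinearMap.range (dl a)) ≤ 1 := by
      simpa using (Submodule.finrank_le (LinearMap.range (dl a)))
    have hne : LinearMap.range (dl a) ≠ ⊥ := by
      rw [ne_eq, LinearMap.range_eq_bot]; exact dl_ne_zero ha
    have : Module.finrank F (LinearMap.range (dl a)) ≠ 0 := by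
      rwa [ne_eq, Submodule.finrank_eq_zero]
    omega
  have := LinearMap.finrank_range_add_finrank_ker (dl a)
  rw [hr, h3] at this
  omega

lemma rep_linearIndependent {p q : ℙ F (Fin 3 → F)} (hpq : p ≠ q) :
    LinearIndependent F ![p.rep, q.rep] := by
  have := (Projectivization.independent_pair_iff_ne p q).2 hpq
  rw [Projectivization.independent_iff] at this
  convert this using 1
  funext i
  fin_cases i <;> rfl
  rfl

lemma ker_eq_span_pair {a : Fin 3 → F} (ha : a ≠ 0) {p q : ℙ F (Fin 3 → F)} (hpq : p ≠ q)
    (hp : p ∈ projLine F a) (hq : q ∈ projLine F a) :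
    LinearMap.ker (dl a) = Submodule.span F {p.rep, q.rep} := by
  have hind := rep_linearIndependent hpq
  have hsp : Submodule.span F {p.rep, q.rep} ≤ LinearMap.ker (dl a) := by
    rw [Submodule.span_le]
    rintro x (rfl | rfl)
    · exact hp
    · exact hq
  have hrange : Set.range ![p.rep, q.rep] = {p.rep, q.rep} := by
    ext x
    simp [Fin.exists_fin_two, eq_comm]
    tauto
  have hfr : Module.finrank F (Submodule.span F {p.rep, q.rep}) = 2 := by
    rw [← hrange, finrank_span_eq_card hind]
    simp
  refine (Submodule.eq_of_le_of_finrank_le hsp ?_).symm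
  rw [hfr, finrank_ker_dl ha]

lemma projLine_eq_of_two {a b : Fin 3 → F} (ha : a ≠ 0) (hb : b ≠ 0)
    {p q : ℙ F (Fin 3 → F)} (hpq : p ≠ q)
    (hpa : p ∈ projLine F a) (hqa : q ∈ projLine F a)
    (hpb : p ∈ projLine F b) (hqb : q ∈ projLine F b) :
    projLine F a = projLine F b := by
  have h1 := ker_eq_span_pair ha hpq hpa hqa
  have h2 := ker_eq_span_pair hb hpq hpb hqb
  ext r
  rw [mem_projLine_iff_ker, mem_projLine_iff_ker, h1, ← h2]

lemma projLines_meet {a b : Fin 3 → F} (ha : a ≠ 0) (hb : b ≠ 0) :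
    ∃ p, p ∈ projLine F a ∧ p ∈ projLine F b := by
  have h3 : Module.finrank F (Fin 3 → F) = 3 := by simp
  have h := Submodule.finrank_sup_add_finrank_inf_eq (LinearMap.ker (dl a)) (LinearMap.ker (dl b))
  have hsup : Module.finrank F ↥(LinearMap.ker (dl a) ⊔ LinearMap.ker (dl b)) ≤ 3 := by
    simpa using Submodule.finrank_le (LinearMap.ker (dl a) ⊔ LinearMap.ker (dl b))
  rw [finrank_ker_dl ha, finrank_ker_dl hb] at h
  have hpos : 0 < Module.finrank F ↥(LinearMap.ker (dl a) ⊓ LinearMap.ker (dl b)) := by omega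
  have : LinearMap.ker (dl a) ⊓ LinearMap.ker (dl b) ≠ ⊥ := by
    intro hbot
    rw [hbot] at hpos
    simp at hpos
  obtain ⟨v, hv, hvne⟩ := Submodule.exists_mem_ne_zero_of_ne_bot this
  refine ⟨Projectivization.mk F v hvne, ?_, ?_⟩
  · rw [mem_projLine_mk]; exact hv.1
  · rw [mem_projLine_mk]; exact hv.2

lemma finrank_span_pair' {v w : Fin 3 → F} (h : LinearIndependent F ![v, w]) :
    Module.finrank F (Submodule.span F {v, w}) = 2 := by
  have hrange : Set.range ![v, w] = {v, w} := by
    ext x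
    simp [Fin.exists_fin_two, eq_comm]
    tauto
  rw [← hrange, finrank_span_eq_card h]
  simp

lemma exists_span_ker {a : Fin 3 → F} (ha : a ≠ 0) :
    ∃ v w : Fin 3 → F, LinearIndependent F ![v, w] ∧
      LinearMap.ker (dl a) = Submodule.span F {v, w} := by
  have : FiniteDimensional F (LinearMap.ker (dl a)) := by infer_instance
  let b := Module.finBasisOfFinrankEq F (LinearMap.ker (dl a)) (finrank_ker_dl ha)
  refine ⟨b 0, b 1, ?_, ?_⟩
  · have hli : LinearIndependent F (fun i : Fin 2 => ((b i : _) : Fin 3 → F)) := by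
      exact b.linearIndependent.map' (LinearMap.ker (dl a)).subtype
        (Submodule.ker_subtype _)
    convert hli using 1
    funext i
    fin_cases i <;> rfl
  · have hsp : Submodule.span F {(b 0 : Fin 3 → F), (b 1 : Fin 3 → F)} ≤ LinearMap.ker (dl a) := by
      rw [Submodule.span_le]
      rintro x (rfl | rfl) <;> exact Submodule.coe_mem _
    have hli : LinearIndependent F ![(b 0 : Fin 3 → F), (b 1 : Fin 3 → F)] := by
      have hli : LinearIndependent F (fun i : Fin 2 => ((b i : _) : Fin 3 → F)) :=
        b.linearIndependent.map' (LinearMap.ker (dl a)).subtype (Submodule.ker_subtype _)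
      convert hli using 1
      funext i
      fin_cases i <;> rfl
    refine (Submodule.eq_of_le_of_finrank_le hsp ?_).symm
    rw [finrank_span_pair' hli, finrank_ker_dl ha]

lemma card_projLine [Fintype F] {a : Fin 3 → F} (ha : a ≠ 0) :
    Nat.card (projLine F a) = Fintype.card F + 1 := by
  classical
  obtain ⟨v, w, hind, hker⟩ := exists_span_ker ha
  have pair : ∀ s t : F, s • v + t • w = 0 → s = 0 ∧ t = 0 := LinearIndependent.pair_iff.1 hind
  have hw0 : w ≠ 0 := fun h => one_ne_zero (pair 0 1 (by simp [h])).2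
  have hvw : ∀ t : F, v + t • w ≠ 0 := fun t h => one_ne_zero
    (pair 1 t (by rw [one_smul]; exact h)).1
  have hvmem : v ∈ LinearMap.ker (dl a) := by
    rw [hker]; exact Submodule.subset_span (by simp)
  have hwmem : w ∈ LinearMap.ker (dl a) := by
    rw [hker]; exact Submodule.subset_span (by simp)
  let f : Option F → ↥(projLine F a) := fun o =>
    match o with
    | none => ⟨Projectivization.mk F w hw0, (mem_projLine_mk a hw0).2 hwmem⟩
    | some t => ⟨Projectivization.mk F (v + t • w) (hvw t),
        (mem_projLine_mk a (hvw t)).2 (Submodule.add_mem _ hvmem (Submodule.smul_mem _ t hwmem))⟩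
  have hinj : Function.Injective f := by
    rintro (_ | s) (_ | t) hst
    · rfl
    · exfalso
      have h := Subtype.ext_iff.1 hst
      simp only [f] at h
      obtain ⟨c, hc⟩ := (Projectivization.mk_eq_mk_iff F _ _ _ _).1 h
      refine c.ne_zero ((pair (c : F) ((c : F) * t - 1) ?_).1)
      rw [Units.smul_def] at hc
      linear_combination (norm := module) hc
    · exfalso
      have h := Subtype.ext_iff.1 hst
      simp only [f] at h
      obtain ⟨c, hc⟩ := (Projectivization.mk_eq_mk_iff F _ _ _ _).1 h
      refine one_ne_zero ((pair 1 (s - (c : F)) ?_).1)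
      rw [Units.smul_def] at hc
      linear_combination (norm := module) -hc
    · have h := Subtype.ext_iff.1 hst
      simp only [f] at h
      obtain ⟨c, hc⟩ := (Projectivization.mk_eq_mk_iff F _ _ _ _).1 h
      rw [Units.smul_def] at hc
      have h2 := pair ((c : F) - 1) ((c : F) * t - s) (by linear_combination (norm := module) hc)
      have hc1 : (c : F) = 1 := by have h3 := h2.1; rwa [sub_eq_zero] at h3
      have hst2 : s = t := by
        have h3 := h2.2
        rw [hc1, one_mul, sub_eq_zero] at h3
        exact h3.symm
      rw [hst2]
  have hsurj : Function.Surjective f := by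
    rintro ⟨p, hp⟩
    have hp2 : p.rep ∈ LinearMap.ker (dl a) := hp
    rw [hker, Submodule.mem_span_pair] at hp2
    obtain ⟨c, d, hcd⟩ := hp2
    by_cases hc : c = 0
    · refine ⟨none, ?_⟩
      apply Subtype.ext
      simp only [f]
      have hd : d ≠ 0 := by
        rintro rfl
        exact p.rep_nonzero (by rw [← hcd, hc]; simp)
      conv_rhs => rw [← p.mk_rep]
      rw [Projectivization.mk_eq_mk_iff]
      exact ⟨(Units.mk0 d hd)⁻¹, by
        rw [Units.smul_def]
        simp only [Units.val_inv_eq_inv_val, Units.val_mk0]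
        rw [← hcd, hc]
        rw [zero_smul, zero_add, smul_smul, inv_mul_cancel₀ hd, one_smul]⟩
    · refine ⟨some (d / c), ?_⟩
      apply Subtype.ext
      simp only [f]
      conv_rhs => rw [← p.mk_rep]
      rw [Projectivization.mk_eq_mk_iff]
      exact ⟨(Units.mk0 c hc)⁻¹, by
        rw [Units.smul_def]
        simp only [Units.val_inv_eq_inv_val, Units.val_mk0]
        rw [← hcd, smul_add, smul_smul, smul_smul, inv_mul_cancel₀ hc, one_smul,
          div_eq_inv_mul]⟩
  have := Nat.card_eq_of_bijective f ⟨hinj, hsurj⟩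
  rw [← this, Nat.card_eq_fintype_card, Fintype.card_option]

lemma exists_line_through {p q : ℙ F (Fin 3 → F)} (hpq : p ≠ q) :
    ∃ a : Fin 3 → F, a ≠ 0 ∧ p ∈ projLine F a ∧ q ∈ projLine F a := by
  refine ⟨crossProduct p.rep q.rep, ?_, ?_, ?_⟩
  · exact crossProduct_ne_zero_iff_linearIndependent.2 (rep_linearIndependent hpq)
  · show dl _ p.rep = 0
    show dotProduct _ p.rep = 0
    rw [dotProduct_comm]
    exact dot_self_cross _ _
  · show dl _ q.rep = 0
    show dotProduct _ q.rep = 0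
    rw [dotProduct_comm]
    exact dot_cross_self _ _

lemma exists_line_avoid (p : ℙ F (Fin 3 → F)) :
    ∃ a : Fin 3 → F, a ≠ 0 ∧ p ∉ projLine F a := by
  obtain ⟨i, hi⟩ := Function.ne_iff.1 p.rep_nonzero
  refine ⟨Pi.single i 1, ?_, ?_⟩
  · intro h
    have := congrFun h i
    simp at this
  · intro h
    apply hi
    have : dl (Pi.single i 1) p.rep = 0 := h
    simpa [dl, Pi.single_apply, Finset.sum_ite_eq] using this

lemma inter_unique {a b : Fin 3 → F} (ha : a ≠ 0) (hb : b ≠ 0)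
    (hne : projLine F a ≠ projLine F b) :
    ∃! x, x ∈ projLine F a ∧ x ∈ projLine F b := by
  obtain ⟨p, hp1, hp2⟩ := projLines_meet ha hb
  refine ⟨p, ⟨hp1, hp2⟩, ?_⟩
  rintro y ⟨hy1, hy2⟩
  by_contra hyp
  exact hne (projLine_eq_of_two ha hb hyp hy1 hp1 hy2 hp2)

lemma oval_no_three {q : ℕ} {O : Set (ℙ F (Fin 3 → F))} (hO : IsOval F q O)
    {a : Fin 3 → F} (ha : a ≠ 0) {p₁ p₂ p₃ : ℙ F (Fin 3 → F)}
    (h₁ : p₁ ∈ O) (h₂ : p₂ ∈ O) (h₃ : p₃ ∈ O)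
    (l₁ : p₁ ∈ projLine F a) (l₂ : p₂ ∈ projLine F a) (l₃ : p₃ ∈ projLine F a) :
    p₁ = p₂ ∨ p₁ = p₃ ∨ p₂ = p₃ := by
  by_contra h
  push_neg at h
  have hind := hO.2 _ h₁ _ h₂ _ h₃ h.1 h.2.1 h.2.2
  rw [Projectivization.independent_iff] at hind
  set K := LinearMap.ker (dl a) with hK
  have hmem : ∀ i : Fin 3, (Projectivization.rep ∘ ![p₁, p₂, p₃]) i ∈ K := by
    intro i
    fin_cases i <;> assumption
  let g : Fin 3 → K := fun i => ⟨_, hmem i⟩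
  have hg : LinearIndependent F g := by
    apply LinearIndependent.of_comp K.subtype
    exact hind
  have hle := LinearIndependent.fintype_card_le_finrank hg
  rw [finrank_ker_dl ha] at hle
  simp at hle

instance [Finite F] : Finite (ℙ F (Fin 3 → F)) := Quotient.finite _

lemma injOn_of_surjOn_of_ncard_le {α β : Type*} (f : α → β) {s : Set α} {t : Set β}
    (hs : s.Finite) (hsurj : Set.SurjOn f s t) (hcard : s.ncard ≤ t.ncard) :
    Set.InjOn f s := by
  intro a₁ h₁ a₂ h₂ hf
  by_contra hne
  have hsub : t ⊆ f '' (s \ {a₂}) := by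
    intro b hb
    obtain ⟨a, ha, rfl⟩ := hsurj hb
    by_cases h : a = a₂
    · exact ⟨a₁, ⟨h₁, by simp [hne]⟩, by rw [hf, h]⟩
    · exact ⟨a, ⟨ha, by simp [h]⟩, rfl⟩
  have h1 : t.ncard ≤ (s \ {a₂}).ncard :=
    le_trans (Set.ncard_le_ncard hsub ((hs.diff (t := {a₂})).image f)) (Set.ncard_image_le (hs.diff (t := {a₂})))
  rw [Set.ncard_diff_singleton_of_mem h₂] at h1
  have h2 : 0 < s.ncard := (Set.ncard_pos hs).2 ⟨a₁, h₁⟩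
  omega

lemma tangent_exists_unique [Fintype F] {O : Set (ℙ F (Fin 3 → F))}
    (hO : IsOval F (Fintype.card F) O) {P : ℙ F (Fin 3 → F)} (hP : P ∈ O) :
    ∃! ℓ : Set (ℙ F (Fin 3 → F)), (∃ a, a ≠ 0 ∧ ℓ = projLine F a) ∧ O ∩ ℓ = {P} := by
  classical
  obtain ⟨a₀, ha₀, hPa₀⟩ := exists_line_avoid P
  have hproj : ∀ y : ℙ F (Fin 3 → F), y ≠ P → ∃! x,
      x ∈ projLine F a₀ ∧
        ∃ b, b ≠ 0 ∧ P ∈ projLine F b ∧ y ∈ projLine F b ∧ x ∈ projLine F b := by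
    intro y hy
    obtain ⟨b, hb, hPb, hyb⟩ := exists_line_through (Ne.symm hy)
    obtain ⟨x, hx1, hx2⟩ := projLines_meet ha₀ hb
    refine ⟨x, ⟨hx1, b, hb, hPb, hyb, hx2⟩, ?_⟩
    rintro x' ⟨hx'0, b', hb', hPb', hyb', hx'b'⟩
    have hbb' : projLine F b' = projLine F b :=
      projLine_eq_of_two hb' hb (Ne.symm hy) hPb' hyb' hPb hyb
    by_contra hxx
    have hba : projLine F b = projLine F a₀ :=
      projLine_eq_of_two hb ha₀ hxx (hbb' ▸ hx'b') hx2 hx'0 hx1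
    exact hPa₀ (hba ▸ hPb)
  let π : ℙ F (Fin 3 → F) → ℙ F (Fin 3 → F) := fun y =>
    if h : y ≠ P then (hproj y h).exists.choose else P
  have hπ : ∀ y (h : y ≠ P), π y ∈ projLine F a₀ ∧
      ∃ b, b ≠ 0 ∧ P ∈ projLine F b ∧ y ∈ projLine F b ∧ π y ∈ projLine F b := by
    intro y h
    simp only [π, dif_pos h]
    exact (hproj y h).exists.choose_spec
  have hπu : ∀ y (h : y ≠ P) x, (x ∈ projLine F a₀ ∧
      ∃ b, b ≠ 0 ∧ P ∈ projLine F b ∧ y ∈ projLine F b ∧ x ∈ projLine F b) → π y = x := by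
    intro y h x hx
    exact ((hproj y h).unique (hπ y h) hx)
  set D : Set (ℙ F (Fin 3 → F)) := O \ {P} with hD
  have hDne : ∀ y ∈ D, y ≠ P := fun y hy => hy.2
  have hinj : Set.InjOn π D := by
    intro y₁ hy₁ y₂ hy₂ heq
    obtain ⟨hx₁a, b₁, hb₁, hPb₁, hyb₁, hxb₁⟩ := hπ y₁ (hDne _ hy₁)
    obtain ⟨hx₂a, b₂, hb₂, hPb₂, hyb₂, hxb₂⟩ := hπ y₂ (hDne _ hy₂)
    rw [heq] at hx₁a hxb₁
    have hxP : π y₂ ≠ P := fun h => hPa₀ (h ▸ hx₁a)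
    have hb12 : projLine F b₁ = projLine F b₂ := by
      refine projLine_eq_of_two hb₁ hb₂ (Ne.symm hxP) hPb₁ hxb₁ hPb₂ hxb₂
    have hy₂b₁ : y₂ ∈ projLine F b₁ := hb12 ▸ hyb₂
    rcases oval_no_three hO hb₁ hP hy₁.1 hy₂.1 hPb₁ hyb₁ hy₂b₁ with h | h | h
    · exact absurd h.symm (hDne _ hy₁)
    · exact absurd h.symm (hDne _ hy₂)
    · exact h
  have hOcard : O.ncard = Fintype.card F + 1 := by
    rw [← Nat.card_coe_set_eq]; exact hO.1
  have hDcard : D.ncard = Fintype.card F := by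
    rw [hD, Set.ncard_diff_singleton_of_mem hP]
    omega
  have hLcard : (projLine F a₀).ncard = Fintype.card F + 1 := by
    rw [← Nat.card_coe_set_eq]; exact card_projLine ha₀
  have himgcard : (π '' D).ncard = Fintype.card F := by
    rw [Set.ncard_image_of_injOn hinj, hDcard]
  have himgsub : π '' D ⊆ projLine F a₀ := by
    rintro _ ⟨y, hy, rfl⟩
    exact (hπ y (hDne _ hy)).1
  -- a point on every tangent at P, avoiding the image
  have tangent_pt : ∀ b, b ≠ 0 → O ∩ projLine F b = {P} →
      ∃ x, x ∈ projLine F b ∧ x ∈ projLine F a₀ ∧ x ∉ π '' D := by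
    intro b hb htan
    obtain ⟨x, hxb, hxa⟩ := projLines_meet hb ha₀
    refine ⟨x, hxb, hxa, ?_⟩
    rintro ⟨y, hy, rfl⟩
    obtain ⟨hx₁a, b'', hb'', hPb'', hyb'', hxb''⟩ := hπ y (hDne _ hy)
    have hxP : π y ≠ P := fun h => hPa₀ (h ▸ hx₁a)
    have hPmem : P ∈ O ∩ projLine F b := by rw [htan]; rfl
    have hbb : projLine F b = projLine F b'' :=
      projLine_eq_of_two hb hb'' (Ne.symm hxP) hPmem.2 hxb hPb'' hxb''
    have : y ∈ O ∩ projLine F b := ⟨hy.1, hbb ▸ hyb''⟩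
    rw [htan] at this
    exact (hDne _ hy) this
  -- existence
  obtain ⟨x₀, hx₀L, hx₀img⟩ : ∃ x₀ ∈ projLine F a₀, x₀ ∉ π '' D := by
    apply Set.exists_mem_notMem_of_ncard_lt_ncard ?_ (Set.toFinite _)
    rw [himgcard, hLcard]
    omega
  have hx₀P : x₀ ≠ P := fun h => hPa₀ (h ▸ hx₀L)
  obtain ⟨c, hc, hPc, hx₀c⟩ := exists_line_through (Ne.symm hx₀P)
  have htc : O ∩ projLine F c = {P} := by
    ext z
    constructor
    · rintro ⟨hzO, hzc⟩
      rw [Set.mem_singleton_iff]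
      by_contra hzP
      apply hx₀img
      refine ⟨z, ⟨hzO, hzP⟩, ?_⟩
      exact hπu z hzP x₀ ⟨hx₀L, c, hc, hPc, hzc, hx₀c⟩
    · rintro rfl
      exact ⟨hP, hPc⟩
  refine ⟨projLine F c, ⟨⟨c, hc, rfl⟩, htc⟩, ?_⟩
  -- uniqueness
  rintro ℓ ⟨⟨b, hb, rfl⟩, htb⟩
  by_contra hne
  obtain ⟨x₁, hx₁b, hx₁a, hx₁img⟩ := tangent_pt b hb htb
  obtain ⟨x₂, hx₂c, hx₂a, hx₂img⟩ := tangent_pt c hc htc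
  have hx₁P : x₁ ≠ P := fun h => hPa₀ (h ▸ hx₁a)
  have hPb : P ∈ projLine F b := by
    have : P ∈ O ∩ projLine F b := by rw [htb]; rfl
    exact this.2
  have hx12 : x₁ ≠ x₂ := by
    rintro rfl
    exact hne (projLine_eq_of_two hb hc (Ne.symm hx₁P) hPb hx₁b hPc hx₂c)
  have hsub : insert x₁ (insert x₂ (π '' D)) ⊆ projLine F a₀ := by
    rintro z (rfl | rfl | hz)
    · exact hx₁a
    · exact hx₂a
    · exact himgsub hz
  have hcard2 : (insert x₁ (insert x₂ (π '' D))).ncard = Fintype.card F + 2 := by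
    rw [Set.ncard_insert_of_notMem (by
      rintro (rfl | h)
      · exact hx12 rfl
      · exact hx₁img h),
      Set.ncard_insert_of_notMem hx₂img, himgcard]
  have hle := Set.ncard_le_ncard hsub (Set.toFinite _)
  rw [hcard2, hLcard] at hle
  omega

lemma exists_tangent_through [Fintype F] (hq : Even (Fintype.card F))
    {O : Set (ℙ F (Fin 3 → F))} (hO : IsOval F (Fintype.card F) O)
    {x : ℙ F (Fin 3 → F)} (hx : x ∉ O) :
    ∃ Q ℓ, Q ∈ O ∧ (∃ b, b ≠ 0 ∧ ℓ = projLine F b) ∧ O ∩ ℓ = {Q} ∧ x ∈ ℓ := by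
  classical
  have : Fintype (ℙ F (Fin 3 → F)) := Fintype.ofFinite _
  by_contra hcon
  push_neg at hcon
  -- the line through Q and x, for Q ≠ x
  let g : ℙ F (Fin 3 → F) → Set (ℙ F (Fin 3 → F)) := fun Q =>
    if h : Q ≠ x then projLine F (exists_line_through h).choose else ∅
  have hg : ∀ Q, (h : Q ≠ x) → ∃ b, b ≠ 0 ∧ g Q = projLine F b ∧ Q ∈ g Q ∧ x ∈ g Q := by
    intro Q h
    obtain ⟨hb0, hQb, hxb⟩ := (exists_line_through h).choose_spec
    refine ⟨_, hb0, by simp only [g, dif_pos h], ?_, ?_⟩ <;> simp only [g, dif_pos h]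
    · exact hQb
    · exact hxb
  have hne : ∀ Q ∈ O, Q ≠ x := fun Q hQ h => hx (h ▸ hQ)
  -- fibers
  have hfib : ∀ Q ∈ O, ∀ Q' ∈ O, (Q' ∈ g Q ↔ g Q' = g Q) := by
    intro Q hQ Q' hQ'
    obtain ⟨b, hb0, hgb, hQb, hxb⟩ := hg Q (hne Q hQ)
    obtain ⟨b', hb'0, hgb', hQb', hxb'⟩ := hg Q' (hne Q' hQ')
    constructor
    · intro hmem
      rw [hgb, hgb']
      exact projLine_eq_of_two hb'0 hb0 (Ne.symm (hne Q' hQ')) (hgb' ▸ hxb') (hgb' ▸ hQb')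
        (hgb ▸ hxb) (hgb ▸ hmem)
    · intro heq
      rw [← heq]
      exact hQb'
  -- each line through x meets O in exactly two points
  have htwo : ∀ Q ∈ O, (O ∩ g Q).ncard = 2 := by
    intro Q hQ
    obtain ⟨b, hb0, hgb, hQb, hxb⟩ := hg Q (hne Q hQ)
    have hnotone : O ∩ g Q ≠ {Q} := by
      intro h1
      exact hcon Q (g Q) hQ ⟨b, hb0, hgb⟩ h1 hxb
    have hQmem : Q ∈ O ∩ g Q := ⟨hQ, hQb⟩
    have hex : ∃ Q' ∈ O ∩ g Q, Q' ≠ Q := by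
      by_contra hno
      push_neg at hno
      exact hnotone (Set.eq_singleton_iff_unique_mem.2 ⟨hQmem, hno⟩)
    obtain ⟨Q', hQ'mem, hQ'Q⟩ := hex
    have hpair : O ∩ g Q = {Q, Q'} := by
      ext r
      constructor
      · rintro ⟨hrO, hrg⟩
        rcases oval_no_three hO hb0 hQ hQ'mem.1 hrO (hgb ▸ hQb) (hgb ▸ hQ'mem.2)
          (hgb ▸ hrg) with h | h | h
        · exact absurd h.symm hQ'Q
        · exact Or.inl h.symm
        · exact Or.inr h.symm
      · rintro (rfl | rfl)
        · exact hQmem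
        · exact hQ'mem
    rw [hpair]
    exact Set.ncard_pair (Ne.symm hQ'Q)
  -- Finset counting
  set Fo : Finset (ℙ F (Fin 3 → F)) := O.toFinset with hFo
  have hFocard : Fo.card = Fintype.card F + 1 := by
    rw [hFo, ← Set.ncard_eq_toFinset_card', ← Nat.card_coe_set_eq]
    exact hO.1
  have hsum := Finset.card_eq_sum_card_fiberwise
    (f := g) (s := Fo) (t := Fo.image g) (fun Q hQ => Finset.mem_image_of_mem g hQ)
  have hfibcard : ∀ ℓ ∈ Fo.image g, (Fo.filter (fun Q => g Q = ℓ)).card = 2 := by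
    intro ℓ hℓ
    obtain ⟨Q₀, hQ₀, rfl⟩ := Finset.mem_image.1 hℓ
    have hQ₀O : Q₀ ∈ O := by rwa [hFo, Set.mem_toFinset] at hQ₀
    have : (Fo.filter (fun Q => g Q = g Q₀)) = (O ∩ g Q₀).toFinset := by
      ext r
      simp only [Finset.mem_filter, hFo, Set.mem_toFinset, Set.mem_inter_iff]
      constructor
      · rintro ⟨hrO, hr⟩
        exact ⟨hrO, (hfib Q₀ hQ₀O r hrO).2 hr⟩
      · rintro ⟨hrO, hr⟩
        exact ⟨hrO, (hfib Q₀ hQ₀O r hrO).1 hr⟩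
    rw [this, ← Set.ncard_eq_toFinset_card']
    exact htwo Q₀ hQ₀O
  rw [Finset.sum_congr rfl hfibcard, Finset.sum_const, smul_eq_mul, hFocard] at hsum
  obtain ⟨k, hk⟩ := hq
  omega

lemma secant_unique_tangent [Fintype F] (hq : Even (Fintype.card F))
    {O : Set (ℙ F (Fin 3 → F))} (hO : IsOval F (Fintype.card F) O)
    (T : ℙ F (Fin 3 → F) → Set (ℙ F (Fin 3 → F)))
    (hT : ∀ Q ∈ O, (∃ b, b ≠ 0 ∧ T Q = projLine F b) ∧ O ∩ T Q = {Q})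
    (hTu : ∀ Q ∈ O, ∀ ℓ, (∃ b, b ≠ 0 ∧ ℓ = projLine F b) → O ∩ ℓ = {Q} → ℓ = T Q)
    {c : Fin 3 → F} (hc : c ≠ 0) {P₁ P₂ : ℙ F (Fin 3 → F)} (h12 : P₁ ≠ P₂)
    (hsec : O ∩ projLine F c = {P₁, P₂})
    {x : ℙ F (Fin 3 → F)} (hxc : x ∈ projLine F c) (hxO : x ∉ O) :
    ∃! Q, Q ∈ O ∧ x ∈ T Q := by
  classical
  have hTne : ∀ Q ∈ O, T Q ≠ projLine F c := by
    intro Q hQ h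
    have h1 : O ∩ T Q = {Q} := (hT Q hQ).2
    rw [h, hsec] at h1
    have hP₁ : P₁ ∈ ({Q} : Set _) := h1 ▸ (Set.mem_insert _ _)
    have hP₂ : P₂ ∈ ({Q} : Set _) := h1 ▸ (Set.mem_insert_of_mem _ rfl)
    exact h12 (hP₁.trans hP₂.symm)
  have hQmemT : ∀ Q ∈ O, Q ∈ T Q := by
    intro Q hQ
    have h1 : Q ∈ O ∩ T Q := by rw [(hT Q hQ).2]; rfl
    exact h1.2
  -- if a tangent T Q passes through a point z of line c not in O, then Q is off line c
  have hQnotc : ∀ Q ∈ O, ∀ z, z ∉ O → z ∈ T Q → z ∈ projLine F c → Q ∉ projLine F c := by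
    intro Q hQ z hzO hzT hzc hQc
    obtain ⟨b, hb, hTb⟩ := (hT Q hQ).1
    have hzQ : z ≠ Q := fun h => hzO (h ▸ hQ)
    apply hTne Q hQ
    rw [hTb]
    exact projLine_eq_of_two hb hc hzQ (hTb ▸ hzT) (hTb ▸ hQmemT Q hQ) hzc hQc
  -- unique intersection of T Q with the secant line
  have huniq : ∀ Q ∈ O, ∀ z y, z ∈ T Q → z ∈ projLine F c → y ∈ T Q → y ∈ projLine F c →
      z = y := by
    intro Q hQ z y hzT hzc hyT hyc
    by_contra hzy
    obtain ⟨b, hb, hTb⟩ := (hT Q hQ).1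
    apply hTne Q hQ
    rw [hTb]
    exact projLine_eq_of_two hb hc hzy (hTb ▸ hzT) (hTb ▸ hyT) hzc hyc
  set D : Set (ℙ F (Fin 3 → F)) := O \ projLine F c with hD
  set X : Set (ℙ F (Fin 3 → F)) := projLine F c \ O with hX
  let f : ℙ F (Fin 3 → F) → ℙ F (Fin 3 → F) := fun Q =>
    if h : ∃ y, y ∈ T Q ∧ y ∈ projLine F c then h.choose else x
  have hf : ∀ Q ∈ D, f Q ∈ T Q ∧ f Q ∈ projLine F c ∧ f Q ∈ X := by
    intro Q hQ
    obtain ⟨b, hb, hTb⟩ := (hT Q hQ.1).1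
    have hex : ∃ y, y ∈ T Q ∧ y ∈ projLine F c := by
      obtain ⟨y, hy1, hy2⟩ := projLines_meet hb hc
      exact ⟨y, hTb ▸ hy1, hy2⟩
    have hspec := hex.choose_spec
    have hfQ : f Q = hex.choose := dif_pos hex
    rw [hfQ]
    refine ⟨hspec.1, hspec.2, hspec.2, ?_⟩
    intro hmem
    have : hex.choose ∈ O ∩ T Q := ⟨hmem, hspec.1⟩
    rw [(hT Q hQ.1).2] at this
    exact hQ.2 (this ▸ hspec.2)
  have hfx : ∀ Q ∈ D, ∀ z, z ∈ T Q → z ∈ projLine F c → z = f Q := by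
    intro Q hQ z hz1 hz2
    exact huniq Q hQ.1 z (f Q) hz1 hz2 (hf Q hQ).1 (hf Q hQ).2.1
  have hsurj : Set.SurjOn f D X := by
    intro x' hx'
    obtain ⟨Q, ℓ, hQO, hlin, htan, hx'ℓ⟩ := exists_tangent_through hq hO hx'.2
    have hℓT : ℓ = T Q := hTu Q hQO ℓ hlin htan
    have hx'T : x' ∈ T Q := hℓT ▸ hx'ℓ
    have hQD : Q ∈ D := ⟨hQO, hQnotc Q hQO x' hx'.2 hx'T hx'.1⟩
    exact ⟨Q, hQD, (hfx Q hQD x' hx'T hx'.1).symm⟩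
  have hsub1 : O ∩ projLine F c ⊆ O := Set.inter_subset_left
  have hsub2 : O ∩ projLine F c ⊆ projLine F c := Set.inter_subset_right
  have hOcard : O.ncard = Fintype.card F + 1 := by
    rw [← Nat.card_coe_set_eq]; exact hO.1
  have hLcard : (projLine F c).ncard = Fintype.card F + 1 := by
    rw [← Nat.card_coe_set_eq]; exact card_projLine hc
  have hIcard : (O ∩ projLine F c).ncard = 2 := by rw [hsec]; exact Set.ncard_pair h12
  have hDcard : D.ncard = Fintype.card F - 1 := by
    rw [hD, ← Set.diff_inter_self_eq_diff (t := projLine F c), Set.inter_comm,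
      Set.ncard_diff hsub1, hIcard, hOcard]
    omega
  have hXcard : X.ncard = Fintype.card F - 1 := by
    rw [hX, ← Set.diff_inter_self_eq_diff (t := O),
      Set.ncard_diff hsub2, hIcard, hLcard]
    omega
  have hinj : Set.InjOn f D :=
    injOn_of_surjOn_of_ncard_le f (Set.toFinite D) hsurj (by rw [hDcard, hXcard])
  -- existence
  obtain ⟨Q, ℓ, hQO, hlin, htan, hxℓ⟩ := exists_tangent_through hq hO hxO
  have hℓT : ℓ = T Q := hTu Q hQO ℓ hlin htan
  refine ⟨Q, ⟨hQO, hℓT ▸ hxℓ⟩, ?_⟩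
  rintro Q' ⟨hQ'O, hxT'⟩
  have hxT : x ∈ T Q := hℓT ▸ hxℓ
  have hQD : Q ∈ D := ⟨hQO, hQnotc Q hQO x hxO hxT hxc⟩
  have hQ'D : Q' ∈ D := ⟨hQ'O, hQnotc Q' hQ'O x hxO hxT' hxc⟩
  have h1 : f Q' = x := (hfx Q' hQ'D x hxT' hxc).symm
  have h2 : f Q = x := (hfx Q hQD x hxT hxc).symm
  exact hinj hQ'D hQD (h1.trans h2.symm)

end TangentAux

/-- For `q` even, all tangent lines of an oval `O` of `PG(2, q)` (the lines meeting `O`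
in exactly one point) pass through a common point `N`, the nucleus: the `q + 1` tangent
lines of `O` are concurrent. -/
theorem tangents_concurrent [Fintype F] (hq : Even (Fintype.card F))
    (O : Set (ℙ F (Fin 3 → F))) (hO : IsOval F (Fintype.card F) O) :
    ∃ N : ℙ F (Fin 3 → F), ∀ a : Fin 3 → F, a ≠ 0 →
      (∃! p, p ∈ O ∧ p ∈ projLine F a) → N ∈ projLine F a := by
  classical
  -- the tangent line at each point of O
  let T : ℙ F (Fin 3 → F) → Set (ℙ F (Fin 3 → F)) := fun Q =>
    if h : Q ∈ O then (tangent_exists_unique hO h).exists.choose else ∅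
  have hT : ∀ Q ∈ O, (∃ b, b ≠ 0 ∧ T Q = projLine F b) ∧ O ∩ T Q = {Q} := by
    intro Q hQ
    simp only [T, dif_pos hQ]
    exact (tangent_exists_unique hO hQ).exists.choose_spec
  have hTu : ∀ Q ∈ O, ∀ ℓ, (∃ b, b ≠ 0 ∧ ℓ = projLine F b) → O ∩ ℓ = {Q} → ℓ = T Q := by
    intro Q hQ ℓ h1 h2
    exact (tangent_exists_unique hO hQ).unique ⟨h1, h2⟩ (hT Q hQ)
  -- two distinct points of O
  have hOcard : O.ncard = Fintype.card F + 1 := by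
    rw [← Nat.card_coe_set_eq]; exact hO.1
  obtain ⟨A, B, hA, hB, hAB⟩ := (Set.one_lt_ncard_iff (Set.toFinite O)).1 (by
    rw [hOcard]
    have := Fintype.card_pos (α := F)
    omega)
  have hTAB : T A ≠ T B := by
    intro h
    have h1 : O ∩ T A = {A} := (hT A hA).2
    have h2 : O ∩ T B = {B} := (hT B hB).2
    rw [h, h2] at h1
    exact hAB (Set.singleton_eq_singleton_iff.1 h1).symm
  obtain ⟨bA, hbA, hTbA⟩ := (hT A hA).1
  obtain ⟨bB, hbB, hTbB⟩ := (hT B hB).1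
  obtain ⟨N, hNA, hNB⟩ := projLines_meet hbA hbB
  have hNTA : N ∈ T A := hTbA ▸ hNA
  have hNTB : N ∈ T B := hTbB ▸ hNB
  have hNO : N ∉ O := by
    intro hN
    have h1 : N ∈ O ∩ T A := ⟨hN, hNTA⟩
    have h2 : N ∈ O ∩ T B := ⟨hN, hNTB⟩
    rw [(hT A hA).2] at h1
    rw [(hT B hB).2] at h2
    exact hAB (h1.symm.trans h2 : A = B)
  -- every tangent passes through N
  have hclaim : ∀ Q ∈ O, N ∈ T Q := by
    intro Q hQ
    have hNQ : N ≠ Q := fun h => hNO (h ▸ hQ)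
    obtain ⟨c, hc, hNc, hQc⟩ := exists_line_through hNQ
    by_cases htan : O ∩ projLine F c = {Q}
    · have : projLine F c = T Q := hTu Q hQ _ ⟨c, hc, rfl⟩ htan
      exact this ▸ hNc
    · exfalso
      have hQmem : Q ∈ O ∩ projLine F c := ⟨hQ, hQc⟩
      have hex : ∃ Q' ∈ O ∩ projLine F c, Q' ≠ Q := by
        by_contra hno
        push_neg at hno
        exact htan (Set.eq_singleton_iff_unique_mem.2 ⟨hQmem, hno⟩)
      obtain ⟨Q', hQ'mem, hQ'Q⟩ := hex
      have hpair : O ∩ projLine F c = {Q, Q'} := by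
        ext r
        constructor
        · rintro ⟨hrO, hrc⟩
          rcases oval_no_three hO hc hQ hQ'mem.1 hrO hQc hQ'mem.2 hrc with h | h | h
          · exact absurd h.symm hQ'Q
          · exact Or.inl h.symm
          · exact Or.inr h.symm
        · rintro (rfl | rfl)
          · exact hQmem
          · exact hQ'mem
      have huniq := secant_unique_tangent hq hO T hT hTu hc (Ne.symm hQ'Q) hpair hNc hNO
      exact hAB (huniq.unique ⟨hA, hNTA⟩ ⟨hB, hNTB⟩)
  refine ⟨N, ?_⟩
  intro a ha hex
  obtain ⟨p, ⟨hpO, hpa⟩, hup⟩ := hex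
  have hsing : O ∩ projLine F a = {p} := by
    ext z
    constructor
    · rintro ⟨hzO, hza⟩
      exact hup z ⟨hzO, hza⟩
    · rintro rfl
      exact ⟨hpO, hpa⟩
  have : projLine F a = T p := hTu p hpO _ ⟨a, ha, rfl⟩ hsing
  rw [this]
  exact hclaim p hpO
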